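/- Under the hole-punching graph-cluster randomization design with 0 < p_t < 1 and 0 < p_hp < 1, for each t ∈ {0,1} the cluster-form variance estimator V̂ar[μ̂(t)] = (1/N²)·[ (1/p(t)² − 1/p(t,t))·Σ_{c∈𝒞} Ŝ_c(t,t) + (1/p(t,t) − 1/p(t))·Q̂(t,t) ], where Ŝ_c(t,t) = Σ_{i∈c: Z_i=t} Σ_{j∈c: Z_j=t} Y_i(t)·Y_j(t) and Q̂(t,t) = Σ_{i: Z_i=t} Y_i(t)², is unbiased: E[V̂ar[μ̂(t)]] = Var[μ̂(t)]. -/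

import Mathlib

open MeasureTheory ProbabilityTheory

/-- The Bernoulli measure on `Bool` with success probability `p`. -/
noncomputable def boolBernoulliMeasure (p : ℝ) : Measure Bool :=
  ENNReal.ofReal p • Measure.dirac true + ENNReal.ofReal (1 - p) • Measure.dirac false

instance boolBernoulliMeasure.instIsFiniteMeasure (p : ℝ) :
    IsFiniteMeasure (boolBernoulliMeasure p) where
  measure_univ_lt_top := by
    simp [boolBernoulliMeasure]

/-- The hole-punching graph-cluster randomization design measure on the product space
`(C → Bool) × (Fin N → Bool)`: i.i.d. Bernoulli(`pt`) cluster-level assignments and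
i.i.d. Bernoulli(`php`) unit-level flips, all mutually independent. -/
noncomputable def designMeasure (C : Type*) [Fintype C] (N : ℕ) (pt php : ℝ) :
    Measure ((C → Bool) × (Fin N → Bool)) :=
  (Measure.pi fun _ : C => boolBernoulliMeasure pt).prod
    (Measure.pi fun _ : Fin N => boolBernoulliMeasure php)

/-- The treatment `Z_i` of unit `i`: cluster assignment XOR individual flip. -/
def treat {C : Type*} {N : ℕ} (c : Fin N → C) (i : Fin N)
    (ω : (C → Bool) × (Fin N → Bool)) : Bool :=
  xor (ω.1 (c i)) (ω.2 i)

/-- The marginal propensity `p_i(t) = Pr(Z_i = t)`. -/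
noncomputable def margProp {C : Type*} [Fintype C] {N : ℕ} (pt php : ℝ) (c : Fin N → C)
    (i : Fin N) (t : Bool) : ℝ :=
  (designMeasure C N pt php {ω | treat c i ω = t}).toReal

/-- The joint propensity `p_{ij}(t₁,t₂) = Pr(Z_i = t₁ ∧ Z_j = t₂)`. -/
noncomputable def jointProp {C : Type*} [Fintype C] {N : ℕ} (pt php : ℝ) (c : Fin N → C)
    (i j : Fin N) (t1 t2 : Bool) : ℝ :=
  (designMeasure C N pt php {ω | treat c i ω = t1 ∧ treat c j ω = t2}).toReal

/-- The Horvitz–Thompson estimator `μ̂(t)`. -/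
noncomputable def htEst {C : Type*} [Fintype C] {N : ℕ} (pt php : ℝ) (c : Fin N → C)
    (Y : Fin N → Bool → ℝ) (t : Bool) (ω : (C → Bool) × (Fin N → Bool)) : ℝ :=
  (1 / (N : ℝ)) * ∑ i, if treat c i ω = t then Y i t / margProp pt php c i t else 0

/-- The realized within-cluster sum `Ŝ_c(t1,t2) = Σ_{i∈c: Z_i=t1} Σ_{j∈c: Z_j=t2} Y_i(t1)·Y_j(t2)`
for cluster `k`, as a function of the random assignment `ω`. -/
noncomputable def Shat {C : Type*} [DecidableEq C] {N : ℕ} (c : Fin N → C)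
    (Y : Fin N → Bool → ℝ) (t1 t2 : Bool) (k : C)
    (ω : (C → Bool) × (Fin N → Bool)) : ℝ :=
  ∑ i ∈ Finset.univ.filter (fun i => c i = k ∧ treat c i ω = t1),
    ∑ j ∈ Finset.univ.filter (fun j => c j = k ∧ treat c j ω = t2), Y i t1 * Y j t2

/-- The realized diagonal sum `Q̂(t,t) = Σ_{i: Z_i=t} Y_i(t)²`, as a function of the random
assignment `ω`. -/
noncomputable def Qhat {C : Type*} {N : ℕ} (c : Fin N → C)
    (Y : Fin N → Bool → ℝ) (t : Bool) (ω : (C → Bool) × (Fin N → Bool)) : ℝ :=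
  ∑ i ∈ Finset.univ.filter (fun i => treat c i ω = t), Y i t ^ 2

/-- The cluster-form variance estimator
`V̂ar[μ̂(t)] = (1/N²)·[(1/p(t)² − 1/p(t,t))·Σ_c Ŝ_c(t,t) + (1/p(t,t) − 1/p(t))·Q̂(t,t)]`. -/
noncomputable def varHat {C : Type*} [Fintype C] [DecidableEq C] {N : ℕ} (c : Fin N → C)
    (Y : Fin N → Bool → ℝ) (p : Bool → ℝ) (pj : Bool → Bool → ℝ) (t : Bool)
    (ω : (C → Bool) × (Fin N → Bool)) : ℝ :=
  (1 / (N : ℝ) ^ 2) *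
    ((1 / (p t) ^ 2 - 1 / pj t t) * (∑ k : C, Shat c Y t t k ω)
      + (1 / pj t t - 1 / p t) * Qhat c Y t ω)

/-- The cluster-form covariance estimator
`Ĉov[μ̂(t1),μ̂(t2)] = (1/N²)·[(1/(p(t1)·p(t2)) − 1/p(t1,t2))·Σ_c Ŝ_c(t1,t2)
− Q̂(t1,t1)/(2·p(t1)) − Q̂(t2,t2)/(2·p(t2))]`. -/
noncomputable def covHat {C : Type*} [Fintype C] [DecidableEq C] {N : ℕ} (c : Fin N → C)
    (Y : Fin N → Bool → ℝ) (p : Bool → ℝ) (pj : Bool → Bool → ℝ) (t1 t2 : Bool)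
    (ω : (C → Bool) × (Fin N → Bool)) : ℝ :=
  (1 / (N : ℝ) ^ 2) *
    ((1 / (p t1 * p t2) - 1 / pj t1 t2) * (∑ k : C, Shat c Y t1 t2 k ω)
      - Qhat c Y t1 ω / (2 * p t1) - Qhat c Y t2 ω / (2 * p t2))

/-- The covariance of two real random variables: `Cov[X,Y] = E[(X − E X)(Y − E Y)]`. -/
noncomputable def cov {Ω : Type*} [MeasurableSpace Ω] (P : Measure Ω) (X Y : Ω → ℝ) : ℝ :=
  ∫ ω, (X ω - ∫ x, X x ∂P) * (Y ω - ∫ x, Y x ∂P) ∂P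


section AUX
set_option linter.unusedSectionVars false
/-- real mass function -/
def bmr (p : ℝ) (u : Bool) : ℝ := if u then p else 1 - p

lemma bmr_pos {p : ℝ} (h0 : 0 < p) (h1 : p < 1) (u : Bool) : 0 < bmr p u := by
  cases u <;> simp [bmr] <;> linarith

open Classical in
lemma bern_apply (p : ℝ) (s : Set Bool) :
    boolBernoulliMeasure p s = (if true ∈ s then ENNReal.ofReal p else 0)
      + (if false ∈ s then ENNReal.ofReal (1 - p) else 0) := by
  simp [boolBernoulliMeasure, Measure.dirac_apply' _ (MeasurableSet.of_discrete (s := s)),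
    Set.indicator_apply, mul_ite]

lemma bern_singleton (p : ℝ) (u : Bool) :
    boolBernoulliMeasure p {u} = ENNReal.ofReal (bmr p u) := by
  cases u <;> simp [bern_apply, bmr]

lemma bern_prob {p : ℝ} (h0 : 0 ≤ p) (h1 : p ≤ 1) :
    IsProbabilityMeasure (boolBernoulliMeasure p) := by
  constructor
  rw [bern_apply]
  simp only [Set.mem_univ, if_true]
  rw [← ENNReal.ofReal_add h0 (by linarith)]
  norm_num

section cyl
variable {ι : Type*} [Fintype ι] [DecidableEq ι] {p : ℝ}

lemma pi_cyl_one (h0 : 0 ≤ p) (h1 : p ≤ 1) (i : ι) (v : Bool) :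
    Measure.pi (fun _ : ι => boolBernoulliMeasure p) {f | f i = v}
      = ENNReal.ofReal (bmr p v) := by
  haveI := bern_prob h0 h1
  have hs : {f : ι → Bool | f i = v}
      = Set.pi Set.univ (fun k => if k = i then ({v} : Set Bool) else Set.univ) := by
    ext f
    simp only [Set.mem_setOf_eq, Set.mem_pi, Set.mem_univ, forall_true_left]
    constructor
    · intro h k
      by_cases hk : k = i <;> simp [hk, h]
    · intro h
      have := h i
      simpa using this
  rw [hs, Measure.pi_pi]
  rw [Finset.prod_eq_single_of_mem i (Finset.mem_univ i)]
  · simp [bern_singleton]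
  · intro b _ hb
    rw [if_neg hb]
    exact measure_univ

lemma pi_cyl_two (h0 : 0 ≤ p) (h1 : p ≤ 1) {i j : ι} (hij : i ≠ j) (v w : Bool) :
    Measure.pi (fun _ : ι => boolBernoulliMeasure p) {f | f i = v ∧ f j = w}
      = ENNReal.ofReal (bmr p v) * ENNReal.ofReal (bmr p w) := by
  haveI := bern_prob h0 h1
  have hs : {f : ι → Bool | f i = v ∧ f j = w}
      = Set.pi Set.univ (fun k =>
          if k = i then ({v} : Set Bool) else if k = j then {w} else Set.univ) := by
    ext f
    simp only [Set.mem_setOf_eq, Set.mem_pi, Set.mem_univ, forall_true_left]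
    constructor
    · rintro ⟨h1, h2⟩ k
      by_cases hk : k = i
      · simp [hk, h1]
      · by_cases hk' : k = j <;> simp [hk, hk', h2, Ne.symm hij]
    · intro h
      constructor
      · have := h i; simpa using this
      · have := h j; simpa [hij.symm] using this
  rw [hs, Measure.pi_pi]
  rw [← Finset.prod_subset (Finset.subset_univ ({i, j} : Finset ι))
    (by intro x _ hx
        simp only [Finset.mem_insert, Finset.mem_singleton, not_or] at hx
        rw [if_neg hx.1, if_neg hx.2]
        exact measure_univ)]
  rw [Finset.prod_pair hij]
  simp [Ne.symm hij, bern_singleton]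

end cyl

section design
variable {C : Type*} [Fintype C] [DecidableEq C] {N : ℕ} {pt php : ℝ}

/-- marginal propensity formula -/
def mp (pt php : ℝ) (t : Bool) : ℝ :=
  pt * bmr php (xor true t) + (1 - pt) * bmr php (xor false t)

lemma mp_pos (h0t : 0 < pt) (h1t : pt < 1) (h0h : 0 < php) (h1h : php < 1) (t : Bool) :
    0 < mp pt php t :=
  add_pos (mul_pos h0t (bmr_pos h0h h1h _))
    (mul_pos (by linarith) (bmr_pos h0h h1h _))

lemma designMeasure_prob (h0t : 0 ≤ pt) (h1t : pt ≤ 1) (h0h : 0 ≤ php) (h1h : php ≤ 1) :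
    IsProbabilityMeasure (designMeasure C N pt php) := by
  haveI := bern_prob h0t h1t
  haveI := bern_prob h0h h1h
  unfold designMeasure
  infer_instance

lemma measure_treat (h0t : 0 ≤ pt) (h1t : pt ≤ 1) (h0h : 0 ≤ php) (h1h : php ≤ 1)
    (c : Fin N → C) (i : Fin N) (t : Bool) :
    designMeasure C N pt php {ω | treat c i ω = t} = ENNReal.ofReal (mp pt php t) := by
  have hset : {ω : (C → Bool) × (Fin N → Bool) | treat c i ω = t}
      = ({b : C → Bool | b (c i) = true} ×ˢ {f : Fin N → Bool | f i = xor true t})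
        ∪ ({b : C → Bool | b (c i) = false} ×ˢ {f : Fin N → Bool | f i = xor false t}) := by
    ext ⟨b, f⟩
    simp only [Set.mem_setOf_eq, Set.mem_union, Set.mem_prod, treat]
    cases hb : b (c i) <;> cases hf : f i <;> cases t <;> simp
  rw [hset]
  unfold designMeasure
  rw [measure_union ?_ MeasurableSet.of_discrete]
  · rw [Measure.prod_prod, Measure.prod_prod, pi_cyl_one h0t h1t, pi_cyl_one h0h h1h,
      pi_cyl_one h0t h1t, pi_cyl_one h0h h1h]
    have b1 : bmr pt true = pt := rfl
    have b2 : bmr pt false = 1 - pt := rfl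
    have hb : ∀ u, 0 ≤ bmr php u := fun u => by cases u <;> simp [bmr] <;> linarith
    rw [b1, b2, ← ENNReal.ofReal_mul h0t, ← ENNReal.ofReal_mul (by linarith),
      ← ENNReal.ofReal_add (mul_nonneg h0t (hb _)) (mul_nonneg (by linarith) (hb _))]
    rfl
  · rw [Set.disjoint_left]
    rintro ⟨b, f⟩ ⟨hb, -⟩ ⟨hb', -⟩
    simp only [Set.mem_setOf_eq] at hb hb'
    rw [hb] at hb'
    exact Bool.noConfusion hb'

lemma bmr_nonneg (h0 : 0 ≤ php) (h1 : php ≤ 1) : ∀ u, 0 ≤ bmr php u := fun u => by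
  cases u <;> simp [bmr] <;> linarith

lemma measure_treat_pair_same (h0t : 0 ≤ pt) (h1t : pt ≤ 1) (h0h : 0 ≤ php) (h1h : php ≤ 1)
    (c : Fin N → C) {i j : Fin N} (hij : i ≠ j) (hc : c i = c j) (t1 t2 : Bool) :
    designMeasure C N pt php {ω | treat c i ω = t1 ∧ treat c j ω = t2}
      = ENNReal.ofReal (pt * (bmr php (xor true t1) * bmr php (xor true t2))
          + (1 - pt) * (bmr php (xor false t1) * bmr php (xor false t2))) := by
  have hb := bmr_nonneg h0h h1h
  have hset : {ω : (C → Bool) × (Fin N → Bool) | treat c i ω = t1 ∧ treat c j ω = t2}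
      = ({b : C → Bool | b (c i) = true}
          ×ˢ {f : Fin N → Bool | f i = xor true t1 ∧ f j = xor true t2})
        ∪ ({b : C → Bool | b (c i) = false}
          ×ˢ {f : Fin N → Bool | f i = xor false t1 ∧ f j = xor false t2}) := by
    ext ⟨b, f⟩
    simp only [Set.mem_setOf_eq, Set.mem_union, Set.mem_prod, treat, ← hc]
    cases hbv : b (c i) <;> cases hf : f i <;> cases hg : f j <;> cases t1 <;> cases t2 <;> simp
  rw [hset]
  unfold designMeasure
  rw [measure_union ?_ MeasurableSet.of_discrete]
  · rw [Measure.prod_prod, Measure.prod_prod, pi_cyl_one h0t h1t,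
      pi_cyl_one h0t h1t, pi_cyl_two h0h h1h hij, pi_cyl_two h0h h1h hij]
    have b1 : bmr pt true = pt := rfl
    have b2 : bmr pt false = 1 - pt := rfl
    rw [b1, b2, ← ENNReal.ofReal_mul (hb _), ← ENNReal.ofReal_mul (hb _),
      ← ENNReal.ofReal_mul h0t, ← ENNReal.ofReal_mul (by linarith),
      ← ENNReal.ofReal_add (mul_nonneg h0t (mul_nonneg (hb _) (hb _)))
        (mul_nonneg (by linarith) (mul_nonneg (hb _) (hb _)))]
  · rw [Set.disjoint_left]
    rintro ⟨b, f⟩ ⟨hb1, -⟩ ⟨hb2, -⟩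
    simp only [Set.mem_setOf_eq] at hb1 hb2
    rw [hb1] at hb2
    exact Bool.noConfusion hb2

lemma measure_treat_pair_diff (h0t : 0 ≤ pt) (h1t : pt ≤ 1) (h0h : 0 ≤ php) (h1h : php ≤ 1)
    (c : Fin N → C) {i j : Fin N} (hc : c i ≠ c j) (t1 t2 : Bool) :
    designMeasure C N pt php {ω | treat c i ω = t1 ∧ treat c j ω = t2}
      = ENNReal.ofReal (mp pt php t1 * mp pt php t2) := by
  have hij : i ≠ j := fun h => hc (by rw [h])
  have hb := bmr_nonneg h0h h1h
  have hbt : ∀ u, 0 ≤ bmr pt u := bmr_nonneg h0t h1t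
  set S : Bool → Bool → Set ((C → Bool) × (Fin N → Bool)) := fun u v =>
    ({b : C → Bool | b (c i) = u ∧ b (c j) = v}
      ×ˢ {f : Fin N → Bool | f i = xor u t1 ∧ f j = xor v t2}) with hS
  have hmS : ∀ u v, designMeasure C N pt php (S u v)
      = ENNReal.ofReal (bmr pt u * bmr pt v
          * (bmr php (xor u t1) * bmr php (xor v t2))) := by
    intro u v
    unfold designMeasure
    rw [hS]
    rw [Measure.prod_prod, pi_cyl_two h0t h1t hc, pi_cyl_two h0h h1h hij,
      ← ENNReal.ofReal_mul (hbt _), ← ENNReal.ofReal_mul (hb _),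
      ← ENNReal.ofReal_mul (mul_nonneg (hbt _) (hbt _))]
  have hdisj : ∀ u v u' v', (u, v) ≠ (u', v') → Disjoint (S u v) (S u' v') := by
    intro u v u' v' hne
    rw [Set.disjoint_left]
    rintro ⟨b, f⟩ ⟨⟨h1, h2⟩, -⟩ ⟨⟨h3, h4⟩, -⟩
    exact hne (by rw [← h1, ← h2, h3, h4])
  have hset : {ω : (C → Bool) × (Fin N → Bool) | treat c i ω = t1 ∧ treat c j ω = t2}
      = (S true true ∪ S true false) ∪ (S false true ∪ S false false) := by
    ext ⟨b, f⟩
    simp only [hS, Set.mem_setOf_eq, Set.mem_union, Set.mem_prod, treat]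
    cases hbv : b (c i) <;> cases hbw : b (c j) <;> cases hf : f i <;> cases hg : f j <;>
      cases t1 <;> cases t2 <;> simp
  rw [hset]
  rw [measure_union ?_ MeasurableSet.of_discrete,
    measure_union ?_ MeasurableSet.of_discrete,
    measure_union ?_ MeasurableSet.of_discrete]
  · rw [hmS, hmS, hmS, hmS]
    have e1 : ∀ a b : ℝ, 0 ≤ a → 0 ≤ b →
        ENNReal.ofReal a + ENNReal.ofReal b = ENNReal.ofReal (a + b) := fun a b ha hb =>
      (ENNReal.ofReal_add ha hb).symm
    have n4 : ∀ u v, 0 ≤ bmr pt u * bmr pt v * (bmr php (xor u t1) * bmr php (xor v t2)) :=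
      fun u v => mul_nonneg (mul_nonneg (hbt _) (hbt _)) (mul_nonneg (hb _) (hb _))
    rw [e1 _ _ (n4 _ _) (n4 _ _), e1 _ _ (n4 _ _) (n4 _ _),
      e1 _ _ (add_nonneg (n4 _ _) (n4 _ _)) (add_nonneg (n4 _ _) (n4 _ _))]
    congr 1
    cases t1 <;> cases t2 <;> simp [mp, bmr] <;> ring
  · exact hdisj false true false false (by simp)
  · exact hdisj true true true false (by simp)
  · apply Disjoint.union_left <;> apply Disjoint.union_right
    · exact hdisj true true false true (by simp)
    · exact hdisj true true false false (by simp)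
    · exact hdisj true false false true (by simp)
    · exact hdisj true false false false (by simp)

variable (h0t : 0 < pt) (h1t : pt < 1) (h0h : 0 < php) (h1h : php < 1)
include h0t h1t h0h h1h

lemma margProp_eq (c : Fin N → C) (i : Fin N) (t : Bool) :
    margProp pt php c i t = mp pt php t := by
  rw [margProp, measure_treat h0t.le h1t.le h0h.le h1h.le,
    ENNReal.toReal_ofReal (mp_pos h0t h1t h0h h1h t).le]

lemma jointProp_same_pos (c : Fin N → C) {i j : Fin N} (hij : i ≠ j) (hc : c i = c j)
    (t1 t2 : Bool) : 0 < jointProp pt php c i j t1 t2 := by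
  have hb := bmr_pos h0h h1h
  have hpos : 0 < pt * (bmr php (xor true t1) * bmr php (xor true t2))
      + (1 - pt) * (bmr php (xor false t1) * bmr php (xor false t2)) :=
    add_pos (mul_pos h0t (mul_pos (hb _) (hb _)))
      (mul_pos (by linarith) (mul_pos (hb _) (hb _)))
  rw [jointProp, measure_treat_pair_same h0t.le h1t.le h0h.le h1h.le c hij hc,
    ENNReal.toReal_ofReal hpos.le]
  exact hpos

lemma jointProp_diff (c : Fin N → C) {i j : Fin N} (hc : c i ≠ c j) (t1 t2 : Bool) :
    jointProp pt php c i j t1 t2 = mp pt php t1 * mp pt php t2 := by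
  rw [jointProp, measure_treat_pair_diff h0t.le h1t.le h0h.le h1h.le c hc,
    ENNReal.toReal_ofReal
      (mul_nonneg (mp_pos h0t h1t h0h h1h t1).le (mp_pos h0t h1t h0h h1h t2).le)]

omit h0t h1t h0h h1h

lemma jointProp_diag (c : Fin N → C) (i : Fin N) (t : Bool) :
    jointProp pt php c i i t t = margProp pt php c i t := by
  rw [jointProp, margProp]
  have : {ω : (C → Bool) × (Fin N → Bool) | treat c i ω = t ∧ treat c i ω = t}
      = {ω | treat c i ω = t} := by ext ω; simp
  rw [this]

end design

section integrals
variable {C : Type*} [Fintype C] [DecidableEq C] {N : ℕ} {pt php : ℝ}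

instance designMeasure.instIsFiniteMeasure : IsFiniteMeasure (designMeasure C N pt php) := by
  unfold designMeasure
  infer_instance

lemma integral_ite (P : (C → Bool) × (Fin N → Bool) → Prop) [DecidablePred P] (a : ℝ) :
    ∫ ω, (if P ω then a else 0) ∂(designMeasure C N pt php)
      = (designMeasure C N pt php {ω | P ω}).toReal * a := by
  have h : (fun ω => if P ω then a else 0)
      = Set.indicator {ω | P ω} (fun _ => a) := by
    funext ω
    simp [Set.indicator_apply, Set.mem_setOf_eq]
  rw [h, integral_indicator_const a MeasurableSet.of_discrete, smul_eq_mul]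
  rfl

lemma integral_Shat (c : Fin N → C) (Y : Fin N → Bool → ℝ) (t1 t2 : Bool) (k : C) :
    ∫ ω, Shat c Y t1 t2 k ω ∂(designMeasure C N pt php)
      = ∑ i ∈ Finset.univ.filter (fun i => c i = k),
          ∑ j ∈ Finset.univ.filter (fun j => c j = k),
            jointProp pt php c i j t1 t2 * (Y i t1 * Y j t2) := by
  have hpt : ∀ ω, Shat c Y t1 t2 k ω
      = ∑ i ∈ Finset.univ.filter (fun i => c i = k),
          ∑ j ∈ Finset.univ.filter (fun j => c j = k),
            if treat c i ω = t1 ∧ treat c j ω = t2 then Y i t1 * Y j t2 else 0 := by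
    intro ω
    rw [Shat, ← Finset.filter_filter, Finset.sum_filter]
    refine Finset.sum_congr rfl fun i _ => ?_
    rw [← Finset.filter_filter, Finset.sum_filter]
    by_cases h1 : treat c i ω = t1 <;> simp [h1]
  simp only [hpt]
  rw [integral_finset_sum _ fun _ _ => Integrable.of_finite]
  refine Finset.sum_congr rfl fun i _ => ?_
  rw [integral_finset_sum _ fun _ _ => Integrable.of_finite]
  refine Finset.sum_congr rfl fun j _ => ?_
  exact integral_ite _ _

lemma integral_Qhat (c : Fin N → C) (Y : Fin N → Bool → ℝ) (t : Bool) :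
    ∫ ω, Qhat c Y t ω ∂(designMeasure C N pt php)
      = ∑ i, margProp pt php c i t * Y i t ^ 2 := by
  have hpt : ∀ ω, Qhat c Y t ω
      = ∑ i, if treat c i ω = t then Y i t ^ 2 else 0 := by
    intro ω
    rw [Qhat, Finset.sum_filter]
  simp only [hpt]
  rw [integral_finset_sum _ fun _ _ => Integrable.of_finite]
  exact Finset.sum_congr rfl fun i _ => integral_ite _ _

lemma integral_htEst (c : Fin N → C) (Y : Fin N → Bool → ℝ) (t : Bool) :
    ∫ ω, htEst pt php c Y t ω ∂(designMeasure C N pt php)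
      = (1 / (N : ℝ)) * ∑ i, margProp pt php c i t * (Y i t / margProp pt php c i t) := by
  simp only [htEst]
  rw [MeasureTheory.integral_const_mul]
  congr 1
  rw [integral_finset_sum _ fun _ _ => Integrable.of_finite]
  exact Finset.sum_congr rfl fun i _ => integral_ite _ _

lemma integral_htEst_sq (c : Fin N → C) (Y : Fin N → Bool → ℝ) (t : Bool) :
    ∫ ω, htEst pt php c Y t ω ^ 2 ∂(designMeasure C N pt php)
      = (1 / (N : ℝ)) ^ 2 * ∑ i, ∑ j, jointProp pt php c i j t t
          * (Y i t / margProp pt php c i t * (Y j t / margProp pt php c j t)) := by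
  have hpt : ∀ ω, htEst pt php c Y t ω ^ 2
      = (1 / (N : ℝ)) ^ 2 * ∑ i, ∑ j,
          if treat c i ω = t ∧ treat c j ω = t then
            Y i t / margProp pt php c i t * (Y j t / margProp pt php c j t) else 0 := by
    intro ω
    rw [htEst, mul_pow, sq (∑ _i, _), Finset.sum_mul_sum]
    congr 1
    refine Finset.sum_congr rfl fun i _ => Finset.sum_congr rfl fun j _ => ?_
    by_cases h1 : treat c i ω = t <;> by_cases h2 : treat c j ω = t <;> simp [h1, h2]
  simp only [hpt]
  rw [MeasureTheory.integral_const_mul]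
  congr 1
  rw [integral_finset_sum _ fun _ _ => Integrable.of_finite]
  refine Finset.sum_congr rfl fun i _ => ?_
  rw [integral_finset_sum _ fun _ _ => Integrable.of_finite]
  exact Finset.sum_congr rfl fun j _ => integral_ite _ _

end integrals

end AUX

/-- Under the hole-punching graph-cluster randomization design with `0 < p_t < 1` and
`0 < p_hp < 1`, the cluster-form variance estimator is unbiased:
`E[V̂ar[μ̂(t)]] = Var[μ̂(t)]` for each `t ∈ {0,1}`. -/
theorem variance_estimator_unbiased
    {C : Type*} [Fintype C] [DecidableEq C] {N : ℕ} (hN : 1 ≤ N)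
    (pt php : ℝ) (hpt0 : 0 < pt) (hpt1 : pt < 1) (hphp0 : 0 < php) (hphp1 : php < 1)
    (c : Fin N → C) (Y : Fin N → Bool → ℝ)
    (p : Bool → ℝ) (hp : ∀ (i : Fin N) (t : Bool), margProp pt php c i t = p t)
    (pj : Bool → Bool → ℝ)
    (hpj : ∀ (i j : Fin N) (t1 t2 : Bool), i ≠ j → c i = c j →
      jointProp pt php c i j t1 t2 = pj t1 t2)
    (t : Bool) :
    ∫ ω, varHat c Y p pj t ω ∂(designMeasure C N pt php)
      = variance (htEst pt php c Y t) (designMeasure C N pt php) := by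
  classical
  haveI := designMeasure_prob (C := C) (N := N) (pt := pt) (php := php)
    hpt0.le hpt1.le hphp0.le hphp1.le
  have i0 : Fin N := ⟨0, hN⟩
  have hPmp : p t = mp pt php t := by
    rw [← hp i0 t, margProp_eq hpt0 hpt1 hphp0 hphp1]
  have hP0 : 0 < p t := hPmp ▸ mp_pos hpt0 hpt1 hphp0 hphp1 t
  have hmarg : ∀ i, margProp pt php c i t = p t := fun i => hp i t
  have hqd : ∀ i : Fin N, jointProp pt php c i i t t = p t := fun i => by
    rw [jointProp_diag, hmarg]
  have hqs : ∀ i j : Fin N, j ≠ i → c j = c i →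
      jointProp pt php c i j t t = pj t t := fun i j h h' =>
    hpj i j t t (Ne.symm h) h'.symm
  have hpjpos : ∀ i j : Fin N, j ≠ i → c j = c i → 0 < pj t t := fun i j h h' => by
    rw [← hpj i j t t (Ne.symm h) h'.symm]
    exact jointProp_same_pos hpt0 hpt1 hphp0 hphp1 c (Ne.symm h) h'.symm t t
  have hqdf : ∀ i j : Fin N, c j ≠ c i →
      jointProp pt php c i j t t = p t * p t := fun i j h => by
    rw [jointProp_diff hpt0 hpt1 hphp0 hphp1 c (Ne.symm h), ← hPmp]
  have h1 : ∀ k : C, ∀ i ∈ Finset.univ.filter (fun i => c i = k),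
      (∑ j ∈ Finset.univ.filter (fun j => c j = k),
          jointProp pt php c i j t t * (Y i t * Y j t))
        = ∑ j, if c j = c i then jointProp pt php c i j t t * (Y i t * Y j t) else 0 := by
    intro k i hi
    have hik : c i = k := (Finset.mem_filter.mp hi).2
    rw [← hik, Finset.sum_filter]
  have hfib : (∑ k : C, ∑ i ∈ Finset.univ.filter (fun i => c i = k),
          ∑ j ∈ Finset.univ.filter (fun j => c j = k),
            jointProp pt php c i j t t * (Y i t * Y j t))
      = ∑ i, ∑ j, if c j = c i then jointProp pt php c i j t t * (Y i t * Y j t) else 0 := by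
    calc (∑ k : C, ∑ i ∈ Finset.univ.filter (fun i => c i = k),
            ∑ j ∈ Finset.univ.filter (fun j => c j = k),
              jointProp pt php c i j t t * (Y i t * Y j t))
        = ∑ k : C, ∑ i ∈ Finset.univ.filter (fun i => c i = k),
            ∑ j, if c j = c i then jointProp pt php c i j t t * (Y i t * Y j t) else 0 :=
          Finset.sum_congr rfl fun k _ => Finset.sum_congr rfl fun i hi => h1 k i hi
      _ = ∑ i, ∑ j, if c j = c i then jointProp pt php c i j t t * (Y i t * Y j t) else 0 :=
          Finset.sum_fiberwise Finset.univ c _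
  -- LHS
  have hL : ∫ ω, varHat c Y p pj t ω ∂(designMeasure C N pt php)
      = (1 / (N : ℝ) ^ 2) *
          ((1 / p t ^ 2 - 1 / pj t t) *
              (∑ i, ∑ j, if c j = c i then
                jointProp pt php c i j t t * (Y i t * Y j t) else 0)
            + (1 / pj t t - 1 / p t) * ∑ i, p t * Y i t ^ 2) := by
    simp only [varHat]
    rw [MeasureTheory.integral_const_mul,
      integral_add Integrable.of_finite Integrable.of_finite,
      MeasureTheory.integral_const_mul, MeasureTheory.integral_const_mul,
      integral_finset_sum _ (fun _ _ => Integrable.of_finite), integral_Qhat]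
    simp only [integral_Shat, hmarg]
    rw [hfib]
  rw [hL, variance_eq_sub MemLp.of_discrete]
  simp only [Pi.pow_apply]
  rw [integral_htEst_sq, integral_htEst]
  simp only [hmarg]
  rw [mul_pow, sq (∑ i, p t * (Y i t / p t)), Finset.sum_mul_sum, ← one_div_pow, ← mul_sub]
  congr 1
  have hB : (∑ i, p t * Y i t ^ 2)
      = ∑ i, ∑ j, if j = i then p t * Y i t ^ 2 else 0 := by
    refine Finset.sum_congr rfl fun i _ => ?_
    rw [Finset.sum_ite_eq' Finset.univ i (fun _ => p t * Y i t ^ 2)]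
    simp
  rw [hB]
  simp only [Finset.mul_sum]
  rw [← Finset.sum_add_distrib, ← Finset.sum_sub_distrib]
  refine Finset.sum_congr rfl fun i _ => ?_
  rw [← Finset.sum_add_distrib, ← Finset.sum_sub_distrib]
  refine Finset.sum_congr rfl fun j _ => ?_
  by_cases hij : j = i
  · subst hij
    simp only [if_pos rfl, if_true]
    have key : (1 / p t ^ 2 - 1 / pj t t) * (jointProp pt php c j j t t * (Y j t * Y j t))
          + (1 / pj t t - 1 / p t) * (p t * Y j t ^ 2)
        = (1 / p t ^ 2 - 1 / p t) * (p t * Y j t ^ 2) := by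
      rw [hqd j]
      ring
    rw [key, hqd j]
    field_simp
  · by_cases hc : c j = c i
    · rw [if_pos hc, if_neg hij, mul_zero, add_zero, hqs i j hij hc]
      have hpj0 : pj t t ≠ 0 := (hpjpos i j hij hc).ne'
      field_simp
    · rw [if_neg hc, if_neg hij, mul_zero, mul_zero, add_zero, hqdf i j hc]
      field_simp
      ring
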